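/- (Nussbaum/Kingman convexity for matrices) Let (L(s))_{s∈[0,1]} be a family of essentially nonnegative irreducible N×N real matrices such that for each pair (i,j): if i = j, then s ↦ L(s)_{i,i} is convex on [0,1]; and if i ≠ j, then s ↦ L(s)_{i,j} is either identically zero or log-convex on [0,1]. Then s ↦ λ_PF(L(s)) is convex on [0,1], i.e. λ_PF(L(s)) ≤ (1−s)·λ_PF(L(0)) + s·λ_PF(L(1)) for all s ∈ [0,1]. -/

import Mathlib

open Matrix Finset

/-- `μ` is a (complex) eigenvalue of the real matrix `A`. -/
def IsEigenvalue {N : ℕ} (A : Matrix (Fin N) (Fin N) ℝ) (μ : ℂ) : Prop :=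
  ∃ v : Fin N → ℂ, v ≠ 0 ∧ (A.map Complex.ofReal).mulVec v = μ • v

/-- `A` has no nontrivial invariant coordinate subspace spanned by standard basis vectors. -/
def MatIrreducible {N : ℕ} (A : Matrix (Fin N) (Fin N) ℝ) : Prop :=
  ∀ S : Finset (Fin N), S.Nonempty → S ≠ Finset.univ → ∃ i ∈ S, ∃ j ∉ S, A j i ≠ 0

namespace PFaux

variable {N : ℕ}

noncomputable def supp (y : Fin N → ℝ) : Finset (Fin N) :=
  Finset.univ.filter (fun i => 0 < y i)

lemma mem_supp {y : Fin N → ℝ} {i} : i ∈ supp y ↔ 0 < y i := by simp [supp]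

variable (B : Matrix (Fin N) (Fin N) ℝ)

def g (y : Fin N → ℝ) : Fin N → ℝ := y + B.mulVec y

lemma mulVec_apply (y : Fin N → ℝ) (i : Fin N) :
    B.mulVec y i = ∑ j, B i j * y j := rfl

lemma mulVec_nonneg (hB : ∀ i j, 0 ≤ B i j) {y : Fin N → ℝ} (hy : ∀ i, 0 ≤ y i) :
    ∀ i, 0 ≤ B.mulVec y i := fun i => by
  rw [mulVec_apply]
  exact Finset.sum_nonneg fun j _ => mul_nonneg (hB i j) (hy j)

lemma g_nonneg (hB : ∀ i j, 0 ≤ B i j) {y : Fin N → ℝ} (hy : ∀ i, 0 ≤ y i) :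
    ∀ i, 0 ≤ g B y i := fun i =>
  add_nonneg (hy i) (mulVec_nonneg B hB hy i)

lemma le_g (hB : ∀ i j, 0 ≤ B i j) {y : Fin N → ℝ} (hy : ∀ i, 0 ≤ y i) (i : Fin N) :
    y i ≤ g B y i := le_add_of_nonneg_right (mulVec_nonneg B hB hy i)

lemma supp_subset_g (hB : ∀ i j, 0 ≤ B i j) {y : Fin N → ℝ} (hy : ∀ i, 0 ≤ y i) :
    supp y ⊆ supp (g B y) := fun i hi =>
  mem_supp.2 (lt_of_lt_of_le (mem_supp.1 hi) (le_g B hB hy i))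

lemma supp_ssubset_g (hB : ∀ i j, 0 ≤ B i j) (hirr : MatIrreducible B)
    {y : Fin N → ℝ} (hy : ∀ i, 0 ≤ y i) (hne : (supp y).Nonempty)
    (hnu : supp y ≠ Finset.univ) : supp y ⊂ supp (g B y) := by
  obtain ⟨i, hi, j, hj, hBji⟩ := hirr (supp y) hne hnu
  refine (Finset.ssubset_iff_of_subset (supp_subset_g B hB hy)).2 ⟨j, ?_, hj⟩
  have hBji' : 0 < B j i := lt_of_le_of_ne (hB j i) (Ne.symm hBji)
  have h1 : 0 < B j i * y i := mul_pos hBji' (mem_supp.1 hi)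
  have h2 : B j i * y i ≤ B.mulVec y j := by
    rw [mulVec_apply]
    exact Finset.single_le_sum (f := fun k => B j k * y k)
      (fun k _ => mul_nonneg (hB j k) (hy k)) (Finset.mem_univ i)
  exact mem_supp.2 (lt_of_lt_of_le (lt_of_lt_of_le h1 h2)
    (le_add_of_nonneg_left (hy j)))

lemma iterate_claim (hB : ∀ i j, 0 ≤ B i j) (hirr : MatIrreducible B) :
    ∀ k (y : Fin N → ℝ), (∀ i, 0 ≤ y i) → (supp y).Nonempty →
      (∀ i, 0 ≤ (g B)^[k] y i) ∧
        min N ((supp y).card + k) ≤ (supp ((g B)^[k] y)).card := by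
  intro k
  induction k with
  | zero =>
    intro y hy _
    refine ⟨hy, ?_⟩
    simp only [Function.iterate_zero_apply, Nat.add_zero]
    exact min_le_right _ _
  | succ k ih =>
    intro y hy hne
    obtain ⟨hz, hcard⟩ := ih y hy hne
    set z := (g B)^[k] y with hzdef
    have hznn : ∀ i, 0 ≤ z i := hz
    have hzne : (supp z).Nonempty := by
      obtain ⟨i, hi⟩ := hne
      have hN : 0 < N := i.pos
      have h1 : 1 ≤ (supp y).card := Finset.card_pos.2 ⟨i, hi⟩
      exact Finset.card_pos.1 (by omega)
    rw [Function.iterate_succ_apply', ← hzdef]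
    refine ⟨g_nonneg B hB hznn, ?_⟩
    by_cases hU : supp z = Finset.univ
    · have : (supp (g B z)).card = N := by
        have : supp (g B z) = Finset.univ :=
          Finset.eq_univ_of_forall fun i => supp_subset_g B hB hznn (hU ▸ Finset.mem_univ i)
        rw [this, Finset.card_univ, Fintype.card_fin]
      omega
    · have hss := supp_ssubset_g B hB hirr hznn hzne hU
      have h1 : (supp z).card + 1 ≤ (supp (g B z)).card := Finset.card_lt_card hss
      have h2 : (supp z).card < N := by
        have := Finset.card_lt_card (lt_of_le_of_ne (Finset.subset_univ _) hU)
        simpa using this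
      omega

lemma iterate_pos (hB : ∀ i j, 0 ≤ B i j) (hirr : MatIrreducible B)
    {y : Fin N → ℝ} (hy : ∀ i, 0 ≤ y i) (hy0 : y ≠ 0) :
    ∀ i, 0 < (g B)^[N - 1] y i := by
  have hne : (supp y).Nonempty := by
    obtain ⟨i, hi⟩ := Function.ne_iff.1 hy0
    exact ⟨i, mem_supp.2 (lt_of_le_of_ne (hy i) (Ne.symm hi))⟩
  obtain ⟨_, hcard⟩ := iterate_claim B hB hirr (N - 1) y hy hne
  have hN : 1 ≤ N := (Finset.Nonempty.card_pos hne).trans_le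
    ((Finset.card_le_card (Finset.subset_univ _)).trans (by simp))
  have h1 : 1 ≤ (supp y).card := Finset.card_pos.2 hne
  have : N ≤ (supp ((g B)^[N-1] y)).card := by
    have : min N ((supp y).card + (N - 1)) = N := by omega
    omega
  have huniv : supp ((g B)^[N-1] y) = Finset.univ := by
    apply Finset.eq_univ_of_card
    have := Finset.card_le_card (Finset.subset_univ (supp ((g B)^[N-1] y)))
    simp only [Finset.card_univ, Fintype.card_fin] at *
    omega
  intro i
  exact mem_supp.1 (huniv ▸ Finset.mem_univ i)


-- linearity of iterates of g and commuting with B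
lemma g_add (y z : Fin N → ℝ) : g B (y + z) = g B y + g B z := by
  simp [g, Matrix.mulVec_add]; abel

lemma g_smul (r : ℝ) (y : Fin N → ℝ) : g B (r • y) = r • g B y := by
  simp [g, Matrix.mulVec_smul, smul_add]

lemma g_comm (y : Fin N → ℝ) : B.mulVec (g B y) = g B (B.mulVec y) := by
  simp [g, Matrix.mulVec_add]

lemma iter_add (k : ℕ) (y z : Fin N → ℝ) :
    (g B)^[k] (y + z) = (g B)^[k] y + (g B)^[k] z := by
  induction k with
  | zero => simp
  | succ k ih => rw [Function.iterate_succ_apply', Function.iterate_succ_apply',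
      Function.iterate_succ_apply', ih, g_add]

lemma iter_smul (k : ℕ) (r : ℝ) (y : Fin N → ℝ) :
    (g B)^[k] (r • y) = r • (g B)^[k] y := by
  induction k with
  | zero => simp
  | succ k ih => rw [Function.iterate_succ_apply', Function.iterate_succ_apply', ih, g_smul]

lemma iter_comm (k : ℕ) (y : Fin N → ℝ) :
    B.mulVec ((g B)^[k] y) = (g B)^[k] (B.mulVec y) := by
  induction k with
  | zero => simp
  | succ k ih => rw [Function.iterate_succ_apply', Function.iterate_succ_apply', g_comm, ih]

/-- Perron-Frobenius existence for nonnegative irreducible matrices. -/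
lemma pf_exists_nonneg (hN : 0 < N) (hB : ∀ i j, 0 ≤ B i j) (hirr : MatIrreducible B) :
    ∃ r : ℝ, ∃ u : Fin N → ℝ, (∀ i, 0 < u i) ∧ B.mulVec u = r • u := by
  classical
  set Δ : Set (Fin N → ℝ) := stdSimplex ℝ (Fin N) with hΔ
  set S : Set ℝ := {ρ | ∃ x ∈ Δ, ∀ i, ρ * x i ≤ B.mulVec x i} with hS
  have hS0 : (0 : ℝ) ∈ S := by
    refine ⟨fun _ => (N : ℝ)⁻¹, ⟨fun i => by positivity, ?_⟩, fun i => ?_⟩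
    · simp [Finset.sum_const, Finset.card_univ]
      field_simp
    · rw [zero_mul]
      exact mulVec_nonneg B hB (fun i => by positivity) i
  have hSne : S.Nonempty := ⟨0, hS0⟩
  have hSbdd : BddAbove S := by
    refine ⟨∑ i, ∑ j, B i j, fun ρ hρ => ?_⟩
    obtain ⟨x, ⟨hx0, hx1⟩, hx⟩ := hρ
    have hxle : ∀ j, x j ≤ 1 := by
      intro j
      rw [← hx1]
      exact Finset.single_le_sum (fun k _ => hx0 k) (Finset.mem_univ j)
    calc ρ = ∑ i, ρ * x i := by rw [← Finset.mul_sum, hx1, mul_one]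
      _ ≤ ∑ i, B.mulVec x i := Finset.sum_le_sum fun i _ => hx i
      _ = ∑ i, ∑ j, B i j * x j := by simp [mulVec_apply]
      _ ≤ ∑ i, ∑ j, B i j := by
          refine Finset.sum_le_sum fun i _ => Finset.sum_le_sum fun j _ => ?_
          calc B i j * x j ≤ B i j * 1 := by
                exact mul_le_mul_of_nonneg_left (hxle j) (hB i j)
            _ = B i j := mul_one _
  set r : ℝ := sSup S with hr
  have hr0 : 0 ≤ r := le_csSup hSbdd hS0
  -- compactness: find x in Δ with r • x ≤ B x
  have hKey : ∃ x ∈ Δ, ∀ i, r * x i ≤ B.mulVec x i := by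
    have : Nonempty S := ⟨⟨0, hS0⟩⟩
    set K : S → Set (Fin N → ℝ) :=
      fun ρ => {x ∈ Δ | ∀ i, (ρ : ℝ) * x i ≤ B.mulVec x i} with hK
    have hKmono : ∀ (ρ σ : S), (ρ : ℝ) ≤ σ → K σ ⊆ K ρ := by
      rintro ρ σ hle x ⟨hxΔ, hx⟩
      exact ⟨hxΔ, fun i => le_trans (mul_le_mul_of_nonneg_right hle (hxΔ.1 i)) (hx i)⟩
    have hdir : Directed (· ⊇ ·) K := by
      intro ρ σ
      rcases le_total (ρ : ℝ) (σ : ℝ) with h | h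
      · exact ⟨σ, hKmono ρ σ h, subset_rfl⟩
      · exact ⟨ρ, subset_rfl, hKmono σ ρ h⟩
    have hKne : ∀ ρ : S, (K ρ).Nonempty := by
      rintro ⟨ρ, x, hxΔ, hx⟩
      exact ⟨x, hxΔ, hx⟩
    have hKcl : ∀ ρ : S, IsClosed (K ρ) := by
      intro ρ
      have hKeq : K ρ = Δ ∩ ⋂ i, {x | (ρ : ℝ) * x i ≤ B.mulVec x i} := by
        ext x
        simp [hK, Set.mem_iInter]
      rw [hKeq]
      refine (isClosed_stdSimplex ℝ (Fin N)).inter (isClosed_iInter fun i => isClosed_le ?_ ?_)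
      · exact continuous_const.mul (continuous_apply i)
      · simp only [mulVec_apply]
        exact continuous_finset_sum _ fun j _ => continuous_const.mul (continuous_apply j)
    have hKcp : ∀ ρ : S, IsCompact (K ρ) := fun ρ =>
      (isCompact_stdSimplex ℝ (Fin N)).of_isClosed_subset (hKcl ρ) (fun x hx => hx.1)
    obtain ⟨x, hx⟩ := IsCompact.nonempty_iInter_of_directed_nonempty_isCompact_isClosed
      K hdir hKne hKcp hKcl
    simp only [Set.mem_iInter] at hx
    have hxΔ : x ∈ Δ := (hx ⟨0, hS0⟩).1
    refine ⟨x, hxΔ, fun i => ?_⟩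
    rcases eq_or_lt_of_le (hxΔ.1 i) with h | h
    · rw [← h, mul_zero]
      exact mulVec_nonneg B hB hxΔ.1 i
    · rw [← le_div_iff₀ h]
      refine csSup_le hSne fun ρ hρ => ?_
      rw [le_div_iff₀ h]
      exact (hx ⟨ρ, hρ⟩).2 i
  obtain ⟨x, hxΔ, hx⟩ := hKey
  have hxne : x ≠ 0 := by
    intro h
    have := hxΔ.2
    rw [h] at this
    simp at this
  set z : Fin N → ℝ := B.mulVec x - r • x with hz
  have hzx : B.mulVec x = r • x + z := by rw [hz]; abel
  have hznn : ∀ i, 0 ≤ z i := fun i => by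
    simp only [hz, Pi.sub_apply, Pi.smul_apply, smul_eq_mul, sub_nonneg]
    exact hx i
  set u : Fin N → ℝ := (g B)^[N - 1] x with hu
  have hupos : ∀ i, 0 < u i := iterate_pos B hB hirr hxΔ.1 hxne
  by_cases hz0 : z = 0
  · refine ⟨r, u, hupos, ?_⟩
    rw [hu, iter_comm, hzx, hz0, add_zero, iter_smul]
  · exfalso
    set w : Fin N → ℝ := (g B)^[N - 1] z with hw
    have hwpos : ∀ i, 0 < w i := iterate_pos B hB hirr hznn hz0
    have hBu : B.mulVec u = r • u + w := by
      rw [hu, iter_comm, hzx, iter_add, iter_smul, hw]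
    -- find ε > 0 with (r+ε) u ≤ B u
    obtain ⟨i0, -, hi0⟩ := Finset.exists_min_image Finset.univ (fun i => w i / u i)
      ⟨⟨0, hN⟩, Finset.mem_univ _⟩
    set ε : ℝ := w i0 / u i0 with hε
    have hεpos : 0 < ε := div_pos (hwpos i0) (hupos i0)
    have hru : ∀ i, (r + ε) * u i ≤ B.mulVec u i := by
      intro i
      have h1 : ε ≤ w i / u i := hi0 i (Finset.mem_univ i)
      have h2 : ε * u i ≤ w i := by
        rw [← div_mul_cancel₀ (w i) (ne_of_gt (hupos i))]
        exact mul_le_mul_of_nonneg_right h1 (hupos i).le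
      rw [hBu]
      simp only [Pi.add_apply, Pi.smul_apply, smul_eq_mul]
      nlinarith
    -- normalize u
    have hσ : 0 < ∑ i, u i := Finset.sum_pos (fun i _ => hupos i) ⟨⟨0, hN⟩, Finset.mem_univ _⟩
    have hmem : r + ε ∈ S := by
      refine ⟨(∑ i, u i)⁻¹ • u, ⟨fun i => ?_, ?_⟩, fun i => ?_⟩
      · have h1 := hupos i
        simp only [Pi.smul_apply, smul_eq_mul]
        positivity
      · simp only [Pi.smul_apply, smul_eq_mul, ← Finset.mul_sum]
        field_simp
      · rw [Matrix.mulVec_smul]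
        simp only [Pi.smul_apply, smul_eq_mul]
        have := hru i
        have hinv : (0:ℝ) ≤ (∑ i, u i)⁻¹ := by positivity
        calc (r + ε) * ((∑ i, u i)⁻¹ * u i) = (∑ i, u i)⁻¹ * ((r + ε) * u i) := by ring
          _ ≤ (∑ i, u i)⁻¹ * B.mulVec u i := by
              exact mul_le_mul_of_nonneg_left this hinv
    have : r + ε ≤ r := le_csSup hSbdd hmem
    linarith


/-- shift helper -/
lemma shift_mulVec (A : Matrix (Fin N) (Fin N) ℝ) (c : ℝ) (y : Fin N → ℝ) (i : Fin N) :
    (Matrix.of fun i j => A i j + if i = j then c else 0).mulVec y i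
      = A.mulVec y i + c * y i := by
  simp only [mulVec_apply, Matrix.of_apply, add_mul, Finset.sum_add_distrib]
  congr 1
  rw [Finset.sum_congr rfl (fun j _ => by rw [ite_mul, zero_mul]),
    Finset.sum_ite_eq Finset.univ i (fun j => c * y j)]
  simp

lemma shift_nonneg (A : Matrix (Fin N) (Fin N) ℝ) (hoff : ∀ i j, i ≠ j → 0 ≤ A i j) :
    ∀ i j, 0 ≤ (Matrix.of fun i j => A i j + if i = j then (1 + ∑ k, |A k k|) else 0) i j := by
  intro i j
  by_cases h : i = j
  · subst h
    rw [Matrix.of_apply, if_pos rfl]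
    have h1 : |A i i| ≤ ∑ k, |A k k| :=
      Finset.single_le_sum (f := fun k => |A k k|) (fun k _ => abs_nonneg _) (Finset.mem_univ i)
    have h2 : -A i i ≤ |A i i| := neg_le_abs _
    linarith
  · simp only [Matrix.of_apply, if_neg h, add_zero]
    exact hoff i j h

/-- Perron–Frobenius existence for essentially nonnegative irreducible matrices. -/
lemma pf_exists (A : Matrix (Fin N) (Fin N) ℝ) (hN : 0 < N)
    (hoff : ∀ i j, i ≠ j → 0 ≤ A i j) (hirr : MatIrreducible A) :
    ∃ ρ : ℝ, ∃ u : Fin N → ℝ, (∀ i, 0 < u i) ∧ A.mulVec u = ρ • u := by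
  set c : ℝ := 1 + ∑ k, |A k k| with hc
  set B : Matrix (Fin N) (Fin N) ℝ :=
    Matrix.of fun i j => A i j + if i = j then c else 0 with hBdef
  have hB : ∀ i j, 0 ≤ B i j := shift_nonneg A hoff
  have hBirr : MatIrreducible B := by
    intro S hS hSU
    obtain ⟨i, hi, j, hj, hA⟩ := hirr S hS hSU
    refine ⟨i, hi, j, hj, ?_⟩
    have hne : j ≠ i := fun h => hj (h ▸ hi)
    simpa [hBdef, if_neg hne] using hA
  obtain ⟨r, u, hupos, hBu⟩ := pf_exists_nonneg B hN hB hBirr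
  refine ⟨r - c, u, hupos, ?_⟩
  funext i
  have := congrFun hBu i
  rw [shift_mulVec A c u i] at this
  simp only [Pi.smul_apply, smul_eq_mul] at this ⊢
  linarith

/-- a real eigenvector gives a complex eigenvalue -/
lemma isEigenvalue_of_real (A : Matrix (Fin N) (Fin N) ℝ) (ρ : ℝ) (u : Fin N → ℝ)
    (hpos : ∀ i, 0 < u i) (hN : 0 < N) (hu : A.mulVec u = ρ • u) :
    IsEigenvalue A ((ρ : ℝ) : ℂ) := by
  refine ⟨fun i => (u i : ℂ), ?_, ?_⟩
  · intro h
    have := congrFun h ⟨0, hN⟩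
    simp only [Pi.zero_apply, Complex.ofReal_eq_zero] at this
    exact (hpos ⟨0, hN⟩).ne' this
  · funext i
    have h1 := congrFun hu i
    rw [mulVec_apply] at h1
    simp only [Pi.smul_apply, smul_eq_mul] at h1
    show ∑ j, (A.map Complex.ofReal) i j * (u j : ℂ) = (ρ : ℂ) • (u i : ℂ)
    simp only [Matrix.map_apply, smul_eq_mul, ← Complex.ofReal_mul, ← Complex.ofReal_sum, h1]

/-- Collatz–Wielandt style upper bound: any real eigenvalue is at most μ whenever
there is a positive vector x with A x ≤ μ x. -/
lemma eig_le (A : Matrix (Fin N) (Fin N) ℝ) (hoff : ∀ i j, i ≠ j → 0 ≤ A i j)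
    (x : Fin N → ℝ) (hx : ∀ i, 0 < x i) (μ : ℝ)
    (hAx : ∀ i, A.mulVec x i ≤ μ * x i) (lam : ℝ)
    (hlam : IsEigenvalue A ((lam : ℝ) : ℂ)) : lam ≤ μ := by
  obtain ⟨v, hv0, hv⟩ := hlam
  set c : ℝ := 1 + ∑ k, |A k k| with hc
  set B : Matrix (Fin N) (Fin N) ℝ :=
    Matrix.of fun i j => A i j + if i = j then c else 0 with hBdef
  have hB : ∀ i j, 0 ≤ B i j := shift_nonneg A hoff
  obtain ⟨k, hk⟩ := Function.ne_iff.1 hv0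
  have hvB : ∀ i, ∑ j, (B i j : ℂ) * v j = ((lam + c : ℝ) : ℂ) * v i := by
    intro i
    have h1 := congrFun hv i
    show ∑ j, ((A i j + if i = j then c else 0 : ℝ) : ℂ) * v j = _
    have h2 : ∑ j, ((A i j + if i = j then c else 0 : ℝ) : ℂ) * v j
        = (∑ j, (A i j : ℂ) * v j) + (c : ℂ) * v i := by
      have hterm : ∀ j, ((A i j + if i = j then c else 0 : ℝ) : ℂ) * v j
          = (A i j : ℂ) * v j + (if i = j then (c : ℂ) * v j else 0) := by
        intro j
        by_cases h : i = j <;> simp [h] <;> push_cast <;> ring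
      rw [Finset.sum_congr rfl (fun j _ => hterm j), Finset.sum_add_distrib,
        Finset.sum_ite_eq Finset.univ i (fun j => (c : ℂ) * v j)]
      simp
    rw [h2]
    have h3 : ∑ j, (A i j : ℂ) * v j = ((lam : ℝ) : ℂ) * v i := by
      simpa [Matrix.mulVec, dotProduct, Matrix.map_apply] using h1
    rw [h3]
    push_cast
    ring
  obtain ⟨i0, -, hi0⟩ := Finset.exists_max_image Finset.univ (fun i => ‖v i‖ / x i)
    ⟨k, Finset.mem_univ k⟩
  set t : ℝ := ‖v i0‖ / x i0 with ht
  have htpos : 0 < t := lt_of_lt_of_le (div_pos (norm_pos_iff.2 hk) (hx k))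
    (hi0 k (Finset.mem_univ k))
  have hbound : ∀ j, ‖v j‖ ≤ t * x j := by
    intro j
    have := hi0 j (Finset.mem_univ j)
    rwa [div_le_iff₀ (hx j)] at this
  have hvi0 : ‖v i0‖ = t * x i0 := by
    rw [ht, div_mul_cancel₀ _ (hx i0).ne']
  have key : (lam + c) * ‖v i0‖ ≤ (μ + c) * ‖v i0‖ := by
    calc (lam + c) * ‖v i0‖ ≤ |lam + c| * ‖v i0‖ :=
          mul_le_mul_of_nonneg_right (le_abs_self _) (norm_nonneg _)
      _ = ‖((lam + c : ℝ) : ℂ) * v i0‖ := by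
          rw [norm_mul, Complex.norm_real, Real.norm_eq_abs]
      _ = ‖∑ j, (B i0 j : ℂ) * v j‖ := by rw [hvB i0]
      _ ≤ ∑ j, ‖(B i0 j : ℂ) * v j‖ := norm_sum_le _ _
      _ = ∑ j, B i0 j * ‖v j‖ := by
          refine Finset.sum_congr rfl fun j _ => ?_
          rw [norm_mul, Complex.norm_real, Real.norm_eq_abs, abs_of_nonneg (hB i0 j)]
      _ ≤ ∑ j, B i0 j * (t * x j) :=
          Finset.sum_le_sum fun j _ => mul_le_mul_of_nonneg_left (hbound j) (hB i0 j)
      _ = t * (A.mulVec x i0 + c * x i0) := by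
          rw [← shift_mulVec A c x i0, mulVec_apply, Finset.mul_sum]
          exact Finset.sum_congr rfl fun j _ => by rw [hBdef]; ring
      _ ≤ t * ((μ + c) * x i0) := by
          refine mul_le_mul_of_nonneg_left ?_ htpos.le
          have := hAx i0
          nlinarith [hx i0]
      _ = (μ + c) * ‖v i0‖ := by rw [hvi0]; ring
  have hnorm : 0 < ‖v i0‖ := by rw [hvi0]; exact mul_pos htpos (hx i0)
  nlinarith


lemma holder_sum {ι : Type*} (t : Finset ι) (s : ℝ) (hs0 : 0 < s) (hs1 : s < 1)
    (a b : ι → ℝ) (ha : ∀ j ∈ t, 0 ≤ a j) (hb : ∀ j ∈ t, 0 ≤ b j) :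
    ∑ j ∈ t, a j ^ (1 - s) * b j ^ s
      ≤ (∑ j ∈ t, a j) ^ (1 - s) * (∑ j ∈ t, b j) ^ s := by
  have h1s : (0:ℝ) < 1 - s := by linarith
  set A := ∑ j ∈ t, a j with hA
  set Bs := ∑ j ∈ t, b j with hB
  have hAnn : 0 ≤ A := Finset.sum_nonneg ha
  have hBnn : 0 ≤ Bs := Finset.sum_nonneg hb
  rcases eq_or_lt_of_le hAnn with hA0 | hApos
  · have hall : ∀ j ∈ t, a j = 0 :=
      (Finset.sum_eq_zero_iff_of_nonneg ha).1 hA0.symm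
    have : ∑ j ∈ t, a j ^ (1 - s) * b j ^ s = 0 :=
      Finset.sum_eq_zero fun j hj => by
        rw [hall j hj, Real.zero_rpow h1s.ne', zero_mul]
    rw [this]
    positivity
  rcases eq_or_lt_of_le hBnn with hB0 | hBpos
  · have hall : ∀ j ∈ t, b j = 0 :=
      (Finset.sum_eq_zero_iff_of_nonneg hb).1 hB0.symm
    have : ∑ j ∈ t, a j ^ (1 - s) * b j ^ s = 0 :=
      Finset.sum_eq_zero fun j hj => by
        rw [hall j hj, Real.zero_rpow hs0.ne', mul_zero]
    rw [this]
    positivity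
  have hstep : ∀ j ∈ t, a j ^ (1 - s) * b j ^ s
      ≤ ((1 - s) * (a j / A) + s * (b j / Bs)) * (A ^ (1 - s) * Bs ^ s) := by
    intro j hj
    have hgm := Real.geom_mean_le_arith_mean2_weighted (by linarith : (0:ℝ) ≤ 1 - s)
      hs0.le (div_nonneg (ha j hj) hAnn) (div_nonneg (hb j hj) hBnn) (by ring)
    have heq : (a j / A) ^ (1 - s) * (b j / Bs) ^ s * (A ^ (1 - s) * Bs ^ s)
        = a j ^ (1 - s) * b j ^ s := by
      rw [Real.div_rpow (ha j hj) hAnn, Real.div_rpow (hb j hj) hBnn]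
      have hA' : A ^ (1 - s) ≠ 0 := (Real.rpow_pos_of_pos hApos _).ne'
      have hB' : Bs ^ s ≠ 0 := (Real.rpow_pos_of_pos hBpos _).ne'
      field_simp
    calc a j ^ (1 - s) * b j ^ s
        = (a j / A) ^ (1 - s) * (b j / Bs) ^ s * (A ^ (1 - s) * Bs ^ s) := heq.symm
      _ ≤ ((1 - s) * (a j / A) + s * (b j / Bs)) * (A ^ (1 - s) * Bs ^ s) := by
          refine mul_le_mul_of_nonneg_right hgm ?_
          positivity
  calc ∑ j ∈ t, a j ^ (1 - s) * b j ^ s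
      ≤ ∑ j ∈ t, ((1 - s) * (a j / A) + s * (b j / Bs)) * (A ^ (1 - s) * Bs ^ s) :=
        Finset.sum_le_sum hstep
    _ = A ^ (1 - s) * Bs ^ s := by
        rw [← Finset.sum_mul]
        have : ∑ j ∈ t, ((1 - s) * (a j / A) + s * (b j / Bs))
            = (1 - s) * (A / A) + s * (Bs / Bs) := by
          rw [Finset.sum_add_distrib, ← Finset.mul_sum, ← Finset.mul_sum,
            ← Finset.sum_div, ← Finset.sum_div]
        rw [this, div_self hApos.ne', div_self hBpos.ne']
        ring


end PFaux

open PFaux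

/-- Nussbaum/Kingman convexity: if `L(s)` is essentially
nonnegative irreducible with convex diagonal and log-convex (or identically
zero) off-diagonal entries, then the Perron–Frobenius eigenvalue
`lam(s)` (the eigenvalue of maximal real part) is convex in `s` on `[0,1]`. -/
theorem PF_convexity (N : ℕ) (L : ℝ → Matrix (Fin N) (Fin N) ℝ)
    (hess : ∀ s ∈ Set.Icc (0:ℝ) 1, ∀ i j, i ≠ j → 0 ≤ L s i j)
    (hirr : ∀ s ∈ Set.Icc (0:ℝ) 1, MatIrreducible (L s))
    (hdiag : ∀ i, ConvexOn ℝ (Set.Icc (0:ℝ) 1) fun s => L s i i)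
    (hoff : ∀ i j, i ≠ j →
      (∀ s ∈ Set.Icc (0:ℝ) 1, L s i j = 0) ∨
      ((∀ s ∈ Set.Icc (0:ℝ) 1, 0 < L s i j) ∧
        ConvexOn ℝ (Set.Icc (0:ℝ) 1) fun s => Real.log (L s i j)))
    (lam : ℝ → ℝ)
    (hlam : ∀ s ∈ Set.Icc (0:ℝ) 1,
      IsEigenvalue (L s) ((lam s : ℝ) : ℂ) ∧
      ∀ μ : ℂ, IsEigenvalue (L s) μ → μ.re ≤ lam s) :
    ∀ s ∈ Set.Icc (0:ℝ) 1, lam s ≤ (1 - s) * lam 0 + s * lam 1 := by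
  have h01 : (0:ℝ) ∈ Set.Icc (0:ℝ) 1 := ⟨le_refl 0, zero_le_one⟩
  have h11 : (1:ℝ) ∈ Set.Icc (0:ℝ) 1 := ⟨zero_le_one, le_refl 1⟩
  intro s hs
  rcases Nat.eq_zero_or_pos N with hN | hN
  · exfalso
    obtain ⟨⟨v, hv0, -⟩, -⟩ := hlam 0 h01
    exact hv0 (funext fun i => absurd i.2 (by omega))
  obtain ⟨hs0, hs1⟩ := hs
  rcases eq_or_lt_of_le hs0 with h0 | h0
  · rw [← h0]; norm_num
  rcases eq_or_lt_of_le hs1 with h1 | h1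
  · rw [h1]; norm_num
  have hs' : s ∈ Set.Icc (0:ℝ) 1 := ⟨hs0, hs1⟩
  have h1s : (0:ℝ) < 1 - s := by linarith
  obtain ⟨ρ0, u, hupos, hu⟩ := pf_exists (L 0) hN (hess 0 h01) (hirr 0 h01)
  obtain ⟨ρ1, w, hwpos, hw⟩ := pf_exists (L 1) hN (hess 1 h11) (hirr 1 h11)
  have hρ0 : ρ0 ≤ lam 0 := by
    have := (hlam 0 h01).2 (ρ0 : ℂ) (isEigenvalue_of_real _ _ _ hupos hN hu)
    simpa using this
  have hρ1 : ρ1 ≤ lam 1 := by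
    have := (hlam 1 h11).2 (ρ1 : ℂ) (isEigenvalue_of_real _ _ _ hwpos hN hw)
    simpa using this
  set x : Fin N → ℝ := fun i => u i ^ (1 - s) * w i ^ s with hx
  have hxpos : ∀ i, 0 < x i := fun i =>
    mul_pos (Real.rpow_pos_of_pos (hupos i) _) (Real.rpow_pos_of_pos (hwpos i) _)
  -- key estimate
  have key : ∀ i, (L s).mulVec x i ≤ ((1 - s) * ρ0 + s * ρ1) * x i := by
    intro i
    rw [mulVec_apply, ← Finset.add_sum_erase _ _ (Finset.mem_univ i)]
    -- diagonal bound
    have hdiagle : L s i i ≤ (1 - s) * L 0 i i + s * L 1 i i := by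
      have := (hdiag i).2 h01 h11 (by linarith : (0:ℝ) ≤ 1 - s) hs0 (by ring)
      simpa using this
    -- eigen-identities at endpoints, restricted to erase i
    have hu_i := congrFun hu i
    have hw_i := congrFun hw i
    rw [mulVec_apply] at hu_i hw_i
    simp only [Pi.smul_apply, smul_eq_mul] at hu_i hw_i
    have hu_erase : ∑ j ∈ Finset.univ.erase i, L 0 i j * u j = (ρ0 - L 0 i i) * u i := by
      have h := Finset.add_sum_erase Finset.univ (fun j => L 0 i j * u j) (Finset.mem_univ i)
      rw [hu_i] at h
      linarith
    have hw_erase : ∑ j ∈ Finset.univ.erase i, L 1 i j * w j = (ρ1 - L 1 i i) * w i := by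
      have h := Finset.add_sum_erase Finset.univ (fun j => L 1 i j * w j) (Finset.mem_univ i)
      rw [hw_i] at h
      linarith
    have ha_nn : ∀ j ∈ Finset.univ.erase i, 0 ≤ L 0 i j * u j := fun j hj =>
      mul_nonneg (hess 0 h01 i j (Ne.symm (Finset.mem_erase.1 hj).1)) (hupos j).le
    have hb_nn : ∀ j ∈ Finset.univ.erase i, 0 ≤ L 1 i j * w j := fun j hj =>
      mul_nonneg (hess 1 h11 i j (Ne.symm (Finset.mem_erase.1 hj).1)) (hwpos j).le
    have hρ0d : 0 ≤ ρ0 - L 0 i i := by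
      have h := Finset.sum_nonneg ha_nn
      rw [hu_erase] at h
      nlinarith [hupos i]
    have hρ1d : 0 ≤ ρ1 - L 1 i i := by
      have h := Finset.sum_nonneg hb_nn
      rw [hw_erase] at h
      nlinarith [hwpos i]
    -- entrywise off-diagonal bound
    have hentry : ∀ j ∈ Finset.univ.erase i,
        L s i j * x j ≤ (L 0 i j * u j) ^ (1 - s) * (L 1 i j * w j) ^ s := by
      intro j hj
      have hne : i ≠ j := Ne.symm (Finset.mem_erase.1 hj).1
      rcases hoff i j hne with hzero | ⟨hpos, hconv⟩
      · rw [hzero s hs', zero_mul]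
        exact mul_nonneg (Real.rpow_nonneg (mul_nonneg (hess 0 h01 i j hne) (hupos j).le) _)
          (Real.rpow_nonneg (mul_nonneg (hess 1 h11 i j hne) (hwpos j).le) _)
      · have hlog : Real.log (L s i j)
            ≤ (1 - s) * Real.log (L 0 i j) + s * Real.log (L 1 i j) := by
          have := hconv.2 h01 h11 (by linarith : (0:ℝ) ≤ 1 - s) hs0 (by ring)
          simpa using this
        have hLs : L s i j ≤ (L 0 i j) ^ (1 - s) * (L 1 i j) ^ s := by
          have h0p := hpos 0 h01
          have h1p := hpos 1 h11
          have hsp := hpos s hs'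
          calc L s i j = Real.exp (Real.log (L s i j)) := (Real.exp_log hsp).symm
            _ ≤ Real.exp ((1 - s) * Real.log (L 0 i j) + s * Real.log (L 1 i j)) :=
                Real.exp_le_exp.2 hlog
            _ = (L 0 i j) ^ (1 - s) * (L 1 i j) ^ s := by
                rw [Real.exp_add, Real.rpow_def_of_pos h0p, Real.rpow_def_of_pos h1p,
                  mul_comm (Real.log (L 0 i j)), mul_comm (Real.log (L 1 i j))]
        calc L s i j * x j ≤ ((L 0 i j) ^ (1 - s) * (L 1 i j) ^ s) * x j :=
              mul_le_mul_of_nonneg_right hLs (hxpos j).le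
          _ = (L 0 i j * u j) ^ (1 - s) * (L 1 i j * w j) ^ s := by
              rw [hx]
              rw [Real.mul_rpow (hess 0 h01 i j hne) (hupos j).le,
                Real.mul_rpow (hess 1 h11 i j hne) (hwpos j).le]
              ring
    -- Hölder + AM-GM for the off-diagonal sum
    have hoffsum : ∑ j ∈ Finset.univ.erase i, L s i j * x j
        ≤ ((1 - s) * (ρ0 - L 0 i i) + s * (ρ1 - L 1 i i)) * x i := by
      calc ∑ j ∈ Finset.univ.erase i, L s i j * x j
          ≤ ∑ j ∈ Finset.univ.erase i, (L 0 i j * u j) ^ (1 - s) * (L 1 i j * w j) ^ s :=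
            Finset.sum_le_sum hentry
        _ ≤ (∑ j ∈ Finset.univ.erase i, L 0 i j * u j) ^ (1 - s)
              * (∑ j ∈ Finset.univ.erase i, L 1 i j * w j) ^ s :=
            holder_sum _ s h0 h1 _ _ ha_nn hb_nn
        _ = ((ρ0 - L 0 i i) * u i) ^ (1 - s) * ((ρ1 - L 1 i i) * w i) ^ s := by
            rw [hu_erase, hw_erase]
        _ = (ρ0 - L 0 i i) ^ (1 - s) * (ρ1 - L 1 i i) ^ s * x i := by
            rw [Real.mul_rpow hρ0d (hupos i).le, Real.mul_rpow hρ1d (hwpos i).le, hx]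
            ring
        _ ≤ ((1 - s) * (ρ0 - L 0 i i) + s * (ρ1 - L 1 i i)) * x i := by
            refine mul_le_mul_of_nonneg_right ?_ (hxpos i).le
            exact Real.geom_mean_le_arith_mean2_weighted (by linarith) hs0
              hρ0d hρ1d (by ring)
    have hdiagmul : L s i i * x i ≤ ((1 - s) * L 0 i i + s * L 1 i i) * x i :=
      mul_le_mul_of_nonneg_right hdiagle (hxpos i).le
    calc L s i i * x i + ∑ j ∈ Finset.univ.erase i, L s i j * x j
        ≤ ((1 - s) * L 0 i i + s * L 1 i i) * x i
            + ((1 - s) * (ρ0 - L 0 i i) + s * (ρ1 - L 1 i i)) * x i :=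
          add_le_add hdiagmul hoffsum
      _ = ((1 - s) * ρ0 + s * ρ1) * x i := by ring
  have hle := eig_le (L s) (hess s hs') x hxpos _ key (lam s) (hlam s hs').1
  have hfin : (1 - s) * ρ0 + s * ρ1 ≤ (1 - s) * lam 0 + s * lam 1 :=
    add_le_add (mul_le_mul_of_nonneg_left hρ0 (by linarith))
      (mul_le_mul_of_nonneg_left hρ1 hs0)
  linarith
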